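/- arXiv:1210.2456 — 3 statements merged into one kernel-verified Lean document; each statement's English description precedes it below -/
import Mathlib

section
/- For every KAT expression e and every word x ∈ (At·Σ)*, the iterated partial derivative satisfies Δ̂_x(e) ⊆ PD(e). -/
namespace KAT

variable {T A : Type} [DecidableEq A]

/-- Atoms: truth assignments to the primitive tests. -/
abbrev Atom (T : Type) := T → Bool

/-- A guarded string `α₁p₁α₂p₂⋯p_{n-1}αₙ`, as the list of (atom, action)
pairs together with the final atom. -/
structure GStr (T A : Type) where
  pairs : List (Atom T × A)
  last : Atom T

/-- The first atom of a guarded string. -/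
def GStr.first (x : GStr T A) : Atom T :=
  match x.pairs with
  | [] => x.last
  | (α, _) :: _ => α

/-- Fusion product on sets of guarded strings. -/
def fprod (X Y : Set (GStr T A)) : Set (GStr T A) :=
  {z | ∃ x ∈ X, ∃ y ∈ Y, x.last = y.first ∧ z = ⟨x.pairs ++ y.pairs, y.last⟩}

/-- The set of atoms, viewed as guarded strings. -/
def atomsGS : Set (GStr T A) := {z | z.pairs = []}

/-- Fusion powers: `X⁰ = At`, `X^{n+1} = X ⋄ Xⁿ`. -/
def fpow (X : Set (GStr T A)) : ℕ → Set (GStr T A)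
  | 0 => atomsGS
  | n + 1 => fprod X (fpow X n)

/-- `X* = ∪ₙ Xⁿ`. -/
def fstar (X : Set (GStr T A)) : Set (GStr T A) := ⋃ n, fpow X n

/-- Derivative of a set of guarded strings w.r.t. `αp`. -/
def gderiv (α : Atom T) (p : A) (R : Set (GStr T A)) : Set (GStr T A) :=
  {y | (⟨(α, p) :: y.pairs, y.last⟩ : GStr T A) ∈ R}

/-- Boolean expressions over primitive tests `T`. -/
inductive BExp (T : Type) where
  | zero | one
  | test (t : T)
  | not (b : BExp T)
  | or (b₁ b₂ : BExp T)
  | and (b₁ b₂ : BExp T)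

/-- Evaluation of a Boolean expression at an atom (`α ≤ b`). -/
def BExp.eval (α : Atom T) : BExp T → Bool
  | .zero => false
  | .one => true
  | .test t => α t
  | .not b => !(b.eval α)
  | .or b₁ b₂ => b₁.eval α || b₂.eval α
  | .and b₁ b₂ => b₁.eval α && b₂.eval α

/-- KAT expressions over actions `Σ = A` and tests `T`. -/
inductive KExp (T A : Type) where
  | act (p : A)
  | test (b : BExp T)
  | plus (e₁ e₂ : KExp T A)
  | cat (e₁ e₂ : KExp T A)
  | star (e : KExp T A)

/-- Guarded-string semantics of a KAT expression. -/
def gs : KExp T A → Set (GStr T A)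
  | .act p => {z | ∃ α β, z = ⟨[(α, p)], β⟩}
  | .test b => {z | z.pairs = [] ∧ b.eval z.last = true}
  | .plus e₁ e₂ => gs e₁ ∪ gs e₂
  | .cat e₁ e₂ => fprod (gs e₁) (gs e₂)
  | .star e => fstar (gs e)

/-- Syntactic evaluation `E_α`. -/
def Eps (α : Atom T) : KExp T A → Bool
  | .act _ => false
  | .test b => b.eval α
  | .plus e₁ e₂ => Eps α e₁ || Eps α e₂
  | .cat e₁ e₂ => Eps α e₁ && Eps α e₂
  | .star _ => true

/-- `Γ · e`, with `Γ·0 = ∅` and `Γ·1 = Γ`. -/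
def prodSet (Γ : Set (KExp T A)) : KExp T A → Set (KExp T A)
  | .test .zero => ∅
  | .test .one => Γ
  | e => {x | ∃ e' ∈ Γ, x = .cat e' e}

/-- Partial derivatives `Δ_{αp}(e)`. -/
def pd (α : Atom T) (p : A) : KExp T A → Set (KExp T A)
  | .act p' => if p = p' then {.test .one} else ∅
  | .test _ => ∅
  | .plus e₁ e₂ => pd α p e₁ ∪ pd α p e₂
  | .cat e₁ e₂ => prodSet (pd α p e₁) e₂ ∪ (if Eps α e₁ then pd α p e₂ else ∅)
  | .star e => prodSet (pd α p e) (.star e)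

/-- Guarded-string semantics of a set of expressions. -/
def gsSet (E : Set (KExp T A)) : Set (GStr T A) := ⋃ e ∈ E, gs e

/-- Partial derivative of a set of expressions. -/
def pdS (α : Atom T) (p : A) (E : Set (KExp T A)) : Set (KExp T A) :=
  ⋃ e ∈ E, pd α p e

/-- Iterated partial derivative `Δ̂_w(e)` along a word `w ∈ (At·Σ)*`. -/
def pdWord (w : List (Atom T × A)) (e : KExp T A) : Set (KExp T A) :=
  w.foldl (fun E x => pdS x.1 x.2 E) {e}

/-- The closure `PD(e)`. -/
def PD : KExp T A → Set (KExp T A)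
  | .test b => {.test b}
  | .act p => {.act p, .test .one}
  | .plus e₁ e₂ => {.plus e₁ e₂} ∪ PD e₁ ∪ PD e₂
  | .cat e₁ e₂ => {.cat e₁ e₂} ∪ prodSet (PD e₁) e₂ ∪ PD e₂
  | .star e => {.star e} ∪ prodSet (PD e) (.star e)

/-- Number of symbols in the syntactic tree of a Boolean expression. -/
def BExp.size : BExp T → ℕ
  | .zero => 1 | .one => 1 | .test _ => 1
  | .not b => b.size + 1
  | .or b₁ b₂ => b₁.size + b₂.size + 1
  | .and b₁ b₂ => b₁.size + b₂.size + 1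

/-- Number of symbols in the syntactic tree of a KAT expression. -/
def KExp.size : KExp T A → ℕ
  | .act _ => 1
  | .test b => b.size
  | .plus e₁ e₂ => e₁.size + e₂.size + 1
  | .cat e₁ e₂ => e₁.size + e₂.size + 1
  | .star e => e.size + 1

/-- A set of assumptions `Γ`: equations `b p b̄' = 0` and inequalities `c ≤ c'`. -/
structure Gamma (T A : Type) where
  eqns : List (BExp T × A × BExp T)
  ineqs : List (BExp T × BExp T)

/-- `α ∈ At^Γ`. -/
def inAtG (G : Gamma T A) (α : Atom T) : Bool :=
  G.ineqs.all fun cc => !(cc.1.eval α) || cc.2.eval α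

/-- The atoms of `At^Γ`, viewed as guarded strings. -/
def atomsG (G : Gamma T A) : Set (GStr T A) := {z | z.pairs = [] ∧ inAtG G z.last = true}

/-- Γ-restricted fusion powers (base case `At^Γ`). -/
def fpowG (G : Gamma T A) (X : Set (GStr T A)) : ℕ → Set (GStr T A)
  | 0 => atomsG G
  | n + 1 => fprod X (fpowG G X n)

def fstarG (G : Gamma T A) (X : Set (GStr T A)) : Set (GStr T A) := ⋃ n, fpowG G X n

/-- The Γ-restricted guarded-string semantics `GS^Γ`. -/
def gsG (G : Gamma T A) : KExp T A → Set (GStr T A)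
  | .act p => {z | ∃ α β, inAtG G α = true ∧ inAtG G β = true ∧
      (∀ x ∈ G.eqns, x.2.1 = p → x.1.eval α = true → x.2.2.eval β = true) ∧
      z = ⟨[(α, p)], β⟩}
  | .test b => {z | z.pairs = [] ∧ inAtG G z.last = true ∧ b.eval z.last = true}
  | .plus e₁ e₂ => gsG G e₁ ∪ gsG G e₂
  | .cat e₁ e₂ => fprod (gsG G e₁) (gsG G e₂)
  | .star e => fstarG G (gsG G e)

def gsSetG (G : Gamma T A) (E : Set (KExp T A)) : Set (GStr T A) := ⋃ e ∈ E, gsG G e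

/-- Sum of a list of KAT expressions. -/
def sumList (l : List (KExp T A)) : KExp T A := l.foldr .plus (.test .zero)

/-- The universal expression `u = (p₁ + ⋯ + p_k)*`. -/
def uExp (ps : List A) : KExp T A := .star (sumList (ps.map .act))

/-- `r = Σᵢ bᵢpᵢb̄ᵢ' + Σⱼ cⱼc̄ⱼ'`. -/
def rExp (G : Gamma T A) : KExp T A :=
  sumList
    (G.eqns.map (fun x => .cat (.cat (.test x.1) (.act x.2.1)) (.test (.not x.2.2))) ++
     G.ineqs.map (fun x => .cat (.test x.1) (.test (.not x.2))))

/-- The expression `u r u`. -/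
def uru (G : Gamma T A) (ps : List A) : KExp T A :=
  .cat (.cat (uExp ps) (rExp G)) (uExp ps)

/-- `Π{b' | (b p b̄' = 0) ∈ Γ, α ≤ b}` (equal to `1` if there are none). -/
def gammaProd (G : Gamma T A) (α : Atom T) (p : A) : BExp T :=
  ((G.eqns.filter fun x => decide (x.2.1 = p) && x.1.eval α).map fun x => x.2.2).foldr .and .one

def pdGaux (G : Gamma T A) (α : Atom T) (p : A) : KExp T A → Set (KExp T A)
  | .act p' => if p = p' then {.test (gammaProd G α p)} else ∅
  | .test _ => ∅
  | .plus e₁ e₂ => pdGaux G α p e₁ ∪ pdGaux G α p e₂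
  | .cat e₁ e₂ => prodSet (pdGaux G α p e₁) e₂ ∪ (if Eps α e₁ then pdGaux G α p e₂ else ∅)
  | .star e => prodSet (pdGaux G α p e) (.star e)

/-- The Γ-partial derivative `Δ^Γ_{αp}(e)`. -/
def pdG (G : Gamma T A) (α : Atom T) (p : A) (e : KExp T A) : Set (KExp T A) :=
  if inAtG G α then pdGaux G α p e else ∅

/-- The atoms occurring in a guarded string. -/
def atomsOf (x : GStr T A) : List (Atom T) := x.pairs.map Prod.fst ++ [x.last]

/-- The substrings `α p β` of a guarded string. -/
def triplesOf (x : GStr T A) : List (Atom T × A × Atom T) :=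
  List.zipWith (fun ap β => (ap.1, ap.2, β)) x.pairs
    ((x.pairs.map Prod.fst).drop 1 ++ [x.last])

/-- `Γ·e` on transition pairs, with `Γ·0 = ∅` and `Γ·1 = Γ`. -/
def prodPairs (Γ : Set ((Atom T × A) × KExp T A)) :
    KExp T A → Set ((Atom T × A) × KExp T A)
  | .test .zero => ∅
  | .test .one => Γ
  | e => {x | ∃ y ∈ Γ, x = (y.1, .cat y.2 e)}

/-- The transition function `𝖿`. -/
def fset : KExp T A → Set ((Atom T × A) × KExp T A)
  | .act p => {x | ∃ α : Atom T, x = ((α, p), .test .one)}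
  | .test _ => ∅
  | .plus e₁ e₂ => fset e₁ ∪ fset e₂
  | .cat e₁ e₂ => prodPairs (fset e₁) e₂ ∪ {x ∈ fset e₂ | Eps x.1.1 e₁ = true}
  | .star e => prodPairs (fset e) (.star e)

/-- `der_{αp}(e) = {e' | (αp, e') ∈ 𝖿(e)}`. -/
def der (α : Atom T) (p : A) (e : KExp T A) : Set (KExp T A) :=
  {e' | ((α, p), e') ∈ fset e}

end KAT

namespace KAT

variable {T A : Type} [DecidableEq A]

lemma mem_prodSet {Γ : Set (KExp T A)} {e x : KExp T A} :
    x ∈ prodSet Γ e ↔ (e = .test .one ∧ x ∈ Γ) ∨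
      (e ≠ .test .zero ∧ e ≠ .test .one ∧ ∃ e' ∈ Γ, x = .cat e' e) := by
  cases e with
  | test b => cases b <;> simp [prodSet]
  | act p => simp [prodSet]
  | plus e₁ e₂ => simp [prodSet]
  | cat e₁ e₂ => simp [prodSet]
  | star e => simp [prodSet]

lemma prodSet_mono {Γ Δ : Set (KExp T A)} (h : Γ ⊆ Δ) (e : KExp T A) :
    prodSet Γ e ⊆ prodSet Δ e := by
  intro x hx
  rw [mem_prodSet] at hx ⊢
  rcases hx with ⟨h1, h2⟩ | ⟨h1, h2, e', he', hx⟩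
  · exact Or.inl ⟨h1, h h2⟩
  · exact Or.inr ⟨h1, h2, e', h he', hx⟩

lemma mem_PD_self (e : KExp T A) : e ∈ PD e := by
  cases e <;> simp [PD]

lemma pd_subset_PD (α : Atom T) (p : A) (e : KExp T A) : pd α p e ⊆ PD e := by
  induction e with
  | act p' =>
    by_cases h : p = p' <;> simp [pd, PD, h]
  | test b => simp [pd]
  | plus e₁ e₂ ih₁ ih₂ =>
    intro x hx
    rcases hx with hx | hx
    · exact Or.inl (Or.inr (ih₁ hx))
    · exact Or.inr (ih₂ hx)
  | cat e₁ e₂ ih₁ ih₂ =>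
    intro x hx
    rcases hx with hx | hx
    · exact Or.inl (Or.inr (prodSet_mono ih₁ e₂ hx))
    · by_cases h : Eps α e₁ <;> simp [h] at hx
      exact Or.inr (ih₂ hx)
  | star e ih =>
    intro x hx
    exact Or.inr (prodSet_mono ih _ hx)

lemma PD_trans : ∀ {e : KExp T A} {e' : KExp T A}, e' ∈ PD e → PD e' ⊆ PD e := by
  intro e
  induction e with
  | act p =>
    intro e' he'
    rcases he' with he' | he' <;> subst he' <;> intro x hx <;> simp_all [PD]
  | test b =>
    intro e' he'
    simp [PD] at he'; subst he'; exact subset_rfl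
  | plus e₁ e₂ ih₁ ih₂ =>
    intro e' he'
    rcases he' with (he' | he') | he'
    · simp at he'; subst he'; exact subset_rfl
    · exact (ih₁ he').trans (by intro x hx; exact Or.inl (Or.inr hx))
    · exact (ih₂ he').trans (by intro x hx; exact Or.inr hx)
  | cat e₁ e₂ ih₁ ih₂ =>
    intro e' he'
    rcases he' with (he' | he') | he'
    · simp at he'; subst he'; exact subset_rfl
    · rw [mem_prodSet] at he'
      rcases he' with ⟨h1, h2⟩ | ⟨h1, h2, e'', he'', hx⟩
      · -- e₂ = test one, e' ∈ PD e₁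
        refine (ih₁ h2).trans ?_
        intro x hx
        refine Or.inl (Or.inr ?_)
        rw [mem_prodSet]
        exact Or.inl ⟨h1, hx⟩
      · subst hx
        intro x hx
        rcases hx with (hx | hx) | hx
        · simp at hx; subst hx
          refine Or.inl (Or.inr ?_)
          rw [mem_prodSet]
          exact Or.inr ⟨h1, h2, e'', he'', rfl⟩
        · refine Or.inl (Or.inr ?_)
          exact prodSet_mono (ih₁ he'') e₂ hx
        · exact Or.inr hx
    · exact (ih₂ he').trans (fun x hx => Or.inr hx)
  | star e ih =>
    intro e' he'
    rcases he' with he' | he'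
    · simp at he'; subst he'; exact subset_rfl
    · rw [mem_prodSet] at he'
      rcases he' with ⟨h1, _⟩ | ⟨h1, h2, e'', he'', hx⟩
      · exact absurd h1 (by simp)
      · subst hx
        intro x hx
        rcases hx with (hx | hx) | hx
        · simp at hx; subst hx
          refine Or.inr ?_
          rw [mem_prodSet]
          exact Or.inr ⟨h1, h2, e'', he'', rfl⟩
        · exact Or.inr (prodSet_mono (ih he'') _ hx)
        · exact hx

lemma pdS_subset_PD {E : Set (KExp T A)} {e : KExp T A} (h : E ⊆ PD e)
    (α : Atom T) (p : A) : pdS α p E ⊆ PD e := by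
  intro x hx
  simp [pdS] at hx
  rcases hx with ⟨e', he', hx⟩
  exact PD_trans (h he') (pd_subset_PD α p e' hx)

end KAT

open KAT in
theorem pdWord_subset_PD_aux {T A : Type} [DecidableEq A]
    (e : KExp T A) (x : List (Atom T × A)) :
    pdWord x e ⊆ PD e := by
  have key : ∀ (w : List (Atom T × A)) (E : Set (KExp T A)), E ⊆ PD e →
      w.foldl (fun E x => pdS x.1 x.2 E) E ⊆ PD e := by
    intro w
    induction w with
    | nil => intro E h; exact h
    | cons a w ih => intro E h; exact ih _ (pdS_subset_PD h a.1 a.2)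
  exact key x {e} (by simp [mem_PD_self])

open KAT in
/-- `Δ̂_x(e) ⊆ PD(e)` for every word `x ∈ (At·Σ)*`. -/
theorem pdWord_subset_PD {T A : Type} [DecidableEq A]
    (e : KExp T A) (x : List (Atom T × A)) :
    pdWord x e ⊆ PD e :=
  pdWord_subset_PD_aux e x
end

section
/- A guarded string x = α₁p₁α₂p₂⋯p_{n-1}αₙ belongs to GS(e) if and only if E_{αₙ}(e') = 1 for some e' ∈ Δ̂_{α₁p₁⋯α_{n-1}p_{n-1}}(e). In particular, membership of a guarded string in GS(e) is decided by iterated partial derivatives. -/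
namespace KAT

variable {T A : Type} [DecidableEq A]

lemma mem_gsSet {E : Set (KExp T A)} {z : GStr T A} :
    z ∈ gsSet E ↔ ∃ e ∈ E, z ∈ gs e := by simp [gsSet]

lemma gstr_eta (z : GStr T A) : z = ⟨z.pairs, z.last⟩ := rfl

lemma fprod_nil_iff {X Y : Set (GStr T A)} {β : Atom T} :
    (⟨[], β⟩ : GStr T A) ∈ fprod X Y ↔
      (⟨[], β⟩ : GStr T A) ∈ X ∧ (⟨[], β⟩ : GStr T A) ∈ Y := by
  constructor
  · rintro ⟨x, hx, y, hy, hlast, hz⟩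
    obtain ⟨h1, h2⟩ := GStr.mk.injEq .. ▸ hz
    obtain ⟨hx0, hy0⟩ := List.append_eq_nil_iff.mp h1.symm
    have hyf : y.first = y.last := by simp [GStr.first, hy0]
    have : x = (⟨[], β⟩ : GStr T A) := by
      rw [gstr_eta x, hx0, hlast, hyf, ← h2]
    have hy' : y = (⟨[], β⟩ : GStr T A) := by rw [gstr_eta y, hy0, ← h2]
    exact ⟨this ▸ hx, hy' ▸ hy⟩
  · rintro ⟨h1, h2⟩
    exact ⟨_, h1, _, h2, rfl, rfl⟩

lemma mem_gs_nil (e : KExp T A) (β : Atom T) :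
    (⟨[], β⟩ : GStr T A) ∈ gs e ↔ Eps β e = true := by
  induction e with
  | act p =>
      simp only [gs, Eps, Set.mem_setOf_eq]
      constructor
      · rintro ⟨α, β', h⟩; cases h
      · intro h; cases h
  | test b => simp [gs, Eps]
  | plus e₁ e₂ ih₁ ih₂ => simp [gs, Eps, ih₁, ih₂, Set.mem_union]
  | cat e₁ e₂ ih₁ ih₂ =>
      show _ ∈ fprod (gs e₁) (gs e₂) ↔ _
      rw [fprod_nil_iff, ih₁, ih₂]; simp [Eps]
  | star e ih =>
      simp only [gs, Eps, fstar, Set.mem_iUnion, iff_true]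
      exact ⟨0, rfl⟩

lemma fprod_biUnion_left {ι : Type} (s : Set ι) (f : ι → Set (GStr T A))
    (Y : Set (GStr T A)) :
    fprod (⋃ i ∈ s, f i) Y = ⋃ i ∈ s, fprod (f i) Y := by
  ext z
  constructor
  · rintro ⟨x, hx, y, hy, h1, h2⟩
    simp only [Set.mem_iUnion] at hx ⊢
    obtain ⟨i, hi, hxi⟩ := hx
    exact ⟨i, hi, x, hxi, y, hy, h1, h2⟩
  · intro hz
    simp only [Set.mem_iUnion] at hz
    obtain ⟨i, hi, x, hxi, y, hy, h1, h2⟩ := hz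
    refine ⟨x, ?_, y, hy, h1, h2⟩
    simp only [Set.mem_iUnion]
    exact ⟨i, hi, hxi⟩

lemma fprod_atoms_right (X : Set (GStr T A)) : fprod X atomsGS = X := by
  ext z
  constructor
  · rintro ⟨x, hx, y, hy, h1, h2⟩
    have hy0 : y.pairs = [] := hy
    have : y.first = y.last := by simp [GStr.first, hy0]
    have : z = x := by
      rw [h2, hy0, gstr_eta x, ← this, ← h1]; simp
    rwa [this]
  · intro hz
    refine ⟨z, hz, ⟨[], z.last⟩, rfl, rfl, ?_⟩
    rw [gstr_eta z]; simp

lemma gs_test_one : gs (.test .one : KExp T A) = atomsGS := by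
  ext z; simp [gs, atomsGS, BExp.eval]

lemma gs_test_zero : gs (.test .zero : KExp T A) = ∅ := by
  ext z; simp [gs, BExp.eval]

lemma fprod_empty_right (X : Set (GStr T A)) : fprod X ∅ = ∅ := by
  ext z; simp [fprod]

lemma gsSet_prodSet (Γ : Set (KExp T A)) (f : KExp T A) :
    gsSet (prodSet Γ f) = fprod (gsSet Γ) (gs f) := by
  have generic : gsSet {x | ∃ e' ∈ Γ, x = KExp.cat e' f} = fprod (gsSet Γ) (gs f) := by
    unfold gsSet
    rw [fprod_biUnion_left]
    ext z
    simp only [Set.mem_iUnion, Set.mem_setOf_eq]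
    constructor
    · rintro ⟨x, ⟨e', he', rfl⟩, hz⟩
      exact ⟨e', he', hz⟩
    · rintro ⟨e', he', hz⟩
      exact ⟨KExp.cat e' f, ⟨e', he', rfl⟩, hz⟩
  match f with
  | .test .zero => simp [prodSet, gsSet, gs_test_zero, fprod_empty_right]
  | .test .one => simp [prodSet, gs_test_one, fprod_atoms_right]
  | .test (.test t) => exact generic
  | .test (.not b) => exact generic
  | .test (.or b₁ b₂) => exact generic
  | .test (.and b₁ b₂) => exact generic
  | .act p => exact generic
  | .plus e₁ e₂ => exact generic
  | .cat e₁ e₂ => exact generic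
  | .star e => exact generic

lemma gderiv_fprod (α : Atom T) (p : A) (X Y : Set (GStr T A)) :
    gderiv α p (fprod X Y) =
      fprod (gderiv α p X) Y ∪ {z ∈ gderiv α p Y | (⟨[], α⟩ : GStr T A) ∈ X} := by
  ext z
  constructor
  · rintro ⟨x, hx, y, hy, h1, h2⟩
    obtain ⟨hp, hl⟩ := GStr.mk.injEq .. ▸ h2
    match hxp : x.pairs with
    | [] =>
        rw [hxp] at hp
        simp only [List.nil_append] at hp
        have hyfst : y.first = α := by
          rw [GStr.first]
          split
          · rename_i h; rw [h] at hp; cases hp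
          · rename_i a l h; rw [h] at hp; cases hp; rfl
        have hxe : x = (⟨[], α⟩ : GStr T A) := by
          rw [gstr_eta x, hxp, h1, hyfst]
        have hye : y = (⟨(α, p) :: z.pairs, z.last⟩ : GStr T A) := by
          rw [gstr_eta y, ← hp, ← hl]
        refine Or.inr ⟨?_, hxe ▸ hx⟩
        show (⟨(α, p) :: z.pairs, z.last⟩ : GStr T A) ∈ Y
        exact hye ▸ hy
    | (a, q) :: u =>
        rw [hxp, List.cons_append] at hp
        obtain ⟨h3, h4⟩ := List.cons.injEq .. ▸ hp
        obtain ⟨ha, hq⟩ := Prod.mk.injEq .. ▸ h3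
        subst ha; subst hq
        refine Or.inl ⟨⟨u, x.last⟩, ?_, y, hy, h1, ?_⟩
        · show (⟨(α, p) :: u, x.last⟩ : GStr T A) ∈ X
          have : x = (⟨(α, p) :: u, x.last⟩ : GStr T A) := by rw [gstr_eta x, hxp]
          exact this ▸ hx
        · rw [gstr_eta z, h4, hl]
  · rintro (⟨x, hx, y, hy, h1, h2⟩ | ⟨hz, hα⟩)
    · refine ⟨⟨(α, p) :: x.pairs, x.last⟩, hx, y, hy, h1, ?_⟩
      show (⟨(α, p) :: z.pairs, z.last⟩ : GStr T A) = _
      obtain ⟨hp, hl⟩ := GStr.mk.injEq .. ▸ h2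
      rw [hp, hl]; rfl
    · exact ⟨⟨[], α⟩, hα, ⟨(α, p) :: z.pairs, z.last⟩, hz, rfl, by simp⟩

lemma gderiv_fstar (α : Atom T) (p : A) (X : Set (GStr T A)) :
    gderiv α p (fstar X) = fprod (gderiv α p X) (fstar X) := by
  ext z
  constructor
  · intro hz
    obtain ⟨n, hn⟩ := Set.mem_iUnion.mp hz
    clear hz
    induction n generalizing z with
    | zero => exact absurd hn (by simp [fpow, atomsGS, gderiv])
    | succ n ih =>
        have hn' : z ∈ gderiv α p (fprod X (fpow X n)) := hn
        rw [gderiv_fprod] at hn'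
        rcases hn' with ⟨x, hx, y, hy, h1, h2⟩ | ⟨hz', _⟩
        · exact ⟨x, hx, y, Set.mem_iUnion.mpr ⟨n, hy⟩, h1, h2⟩
        · exact ih z hz'
  · rintro ⟨x, hx, y, hy, h1, h2⟩
    obtain ⟨n, hn⟩ := Set.mem_iUnion.mp hy
    refine Set.mem_iUnion.mpr ⟨n + 1, ?_⟩
    refine ⟨⟨(α, p) :: x.pairs, x.last⟩, hx, y, hn, h1, ?_⟩
    show (⟨(α, p) :: z.pairs, z.last⟩ : GStr T A) = _
    obtain ⟨hp, hl⟩ := GStr.mk.injEq .. ▸ h2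
    rw [hp, hl]; rfl

lemma gsSet_union (E F : Set (KExp T A)) : gsSet (E ∪ F) = gsSet E ∪ gsSet F :=
  Set.biUnion_union E F _

lemma gsSet_empty : gsSet (∅ : Set (KExp T A)) = ∅ := by simp [gsSet]

lemma gsSet_pd (α : Atom T) (p : A) (e : KExp T A) :
    gsSet (pd α p e) = gderiv α p (gs e) := by
  induction e with
  | act q =>
      by_cases h : p = q
      · subst h
        rw [pd, if_pos rfl]
        have h1 : gsSet {(.test .one : KExp T A)} = gs (.test .one) := by simp [gsSet]
        rw [h1, gs_test_one]
        ext z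
        simp only [atomsGS, Set.mem_setOf_eq]
        constructor
        · intro hz
          show (⟨(α, p) :: z.pairs, z.last⟩ : GStr T A) ∈ gs (.act p)
          exact ⟨α, z.last, by rw [hz]⟩
        · intro hz
          obtain ⟨a, b, hab⟩ := hz
          obtain ⟨hp, -⟩ := GStr.mk.injEq .. ▸ hab
          exact congrArg List.tail hp
      · rw [pd, if_neg h, gsSet_empty]
        ext z
        simp only [Set.mem_empty_iff_false, false_iff]
        rintro ⟨a, b, hh⟩
        obtain ⟨h1, -⟩ := GStr.mk.injEq .. ▸ hh
        have h2 := congrArg List.head? h1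
        simp only [List.head?_cons, Option.some.injEq, Prod.mk.injEq] at h2
        exact h h2.2
  | test b =>
      rw [pd, gsSet_empty]
      ext z
      simp only [gderiv, gs, Set.mem_setOf_eq, Set.mem_empty_iff_false, false_iff]
      rintro ⟨hnil, -⟩
      exact absurd hnil (List.cons_ne_nil _ _)
  | plus e₁ e₂ ih₁ ih₂ =>
      rw [pd, gsSet_union, ih₁, ih₂]
      ext z; simp [gderiv, gs]
  | cat e₁ e₂ ih₁ ih₂ =>
      rw [pd, gsSet_union, gsSet_prodSet, ih₁]
      show _ = gderiv α p (fprod (gs e₁) (gs e₂))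
      rw [gderiv_fprod]
      congr 1
      by_cases h : Eps α e₁
      · rw [if_pos h, ih₂]
        ext z
        simp only [Set.mem_setOf_eq, (mem_gs_nil e₁ α).mpr h, and_true]
      · rw [if_neg h, gsSet_empty]
        ext z
        simp only [Set.mem_setOf_eq, Set.mem_empty_iff_false, false_iff, not_and]
        intro _ hmem
        exact h ((mem_gs_nil e₁ α).mp hmem)
  | star e ih =>
      rw [pd, gsSet_prodSet, ih]
      show _ = gderiv α p (fstar (gs e))
      rw [gderiv_fstar]
      rfl

lemma gsSet_biUnion {ι : Type} (s : Set ι) (f : ι → Set (KExp T A)) :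
    gsSet (⋃ i ∈ s, f i) = ⋃ i ∈ s, gsSet (f i) := by
  ext z
  simp only [gsSet, Set.mem_iUnion]
  constructor
  · rintro ⟨e, ⟨i, hi, he⟩, hz⟩; exact ⟨i, hi, e, he, hz⟩
  · rintro ⟨i, hi, e, he, hz⟩; exact ⟨e, ⟨i, hi, he⟩, hz⟩

lemma gderiv_biUnion {ι : Type} (α : Atom T) (p : A) (s : Set ι)
    (f : ι → Set (GStr T A)) :
    gderiv α p (⋃ i ∈ s, f i) = ⋃ i ∈ s, gderiv α p (f i) := by
  ext z
  simp [gderiv]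

lemma gsSet_pdS (α : Atom T) (p : A) (E : Set (KExp T A)) :
    gsSet (pdS α p E) = gderiv α p (gsSet E) := by
  show gsSet (⋃ e ∈ E, pd α p e) = gderiv α p (gsSet E)
  rw [gsSet_biUnion]
  show _ = gderiv α p (⋃ e ∈ E, gs e)
  rw [gderiv_biUnion]
  exact Set.iUnion₂_congr fun e _ => gsSet_pd α p e

lemma mem_gsSet_fold (w : List (Atom T × A)) (β : Atom T) (E : Set (KExp T A)) :
    (⟨w, β⟩ : GStr T A) ∈ gsSet E ↔
      ∃ e' ∈ w.foldl (fun E x => pdS x.1 x.2 E) E, Eps β e' = true := by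
  induction w generalizing E with
  | nil =>
      simp only [List.foldl_nil, mem_gsSet]
      constructor
      · rintro ⟨e, he, hz⟩; exact ⟨e, he, (mem_gs_nil e β).mp hz⟩
      · rintro ⟨e, he, hz⟩; exact ⟨e, he, (mem_gs_nil e β).mpr hz⟩
  | cons a w ih =>
      rw [List.foldl_cons, ← ih]
      have : (⟨a :: w, β⟩ : GStr T A) ∈ gsSet E ↔
          (⟨w, β⟩ : GStr T A) ∈ gderiv a.1 a.2 (gsSet E) := Iff.rfl
      rw [this, ← gsSet_pdS]

end KAT

open KAT in
/-- Membership of a guarded string in `GS(e)` is decided by iterated partial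
derivatives: `α₁p₁⋯αₙ ∈ GS(e)` iff `E_{αₙ}(e') = 1` for some
`e' ∈ Δ̂_{α₁p₁⋯α_{n-1}p_{n-1}}(e)`. -/
theorem mem_gs_iff_pdWord {T A : Type} [DecidableEq A]
    (e : KExp T A) (w : List (Atom T × A)) (β : Atom T) :
    (⟨w, β⟩ : GStr T A) ∈ gs e ↔ ∃ e' ∈ pdWord w e, Eps β e' = true := by
  have h : gs e = gsSet {e} := by simp [gsSet]
  rw [h, pdWord]
  exact mem_gsSet_fold w β {e}
end

section
/- A guarded string x belongs to GS(uru) (with u = (p₁+⋯+p_k)* and r = Σᵢ bᵢpᵢb̄ᵢ' + Σⱼ cⱼc̄ⱼ') if and only if either some atom α occurring in x satisfies α ≤ cⱼ and α ≰ cⱼ' for some j, or x contains a substring αpᵢβ with α ≤ bᵢ and β ≰ bᵢ' for some i. -/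
namespace KAT

variable {T A : Type} [DecidableEq A]

section Aux
set_option linter.unusedSectionVars false
variable {T A : Type} [DecidableEq A]

@[simp] lemma first_nil (β : Atom T) :
    (GStr.mk ([] : List (Atom T × A)) β).first = β := rfl

@[simp] lemma first_cons (a : Atom T × A) (l : List (Atom T × A)) (β : Atom T) :
    (GStr.mk (a :: l) β).first = a.1 := rfl

lemma sumList_cons (e : KExp T A) (L : List (KExp T A)) :
    sumList (e :: L) = .plus e (sumList L) := rfl

lemma mem_gs_sumList (L : List (KExp T A)) (z : GStr T A) :
    z ∈ gs (sumList L) ↔ ∃ e ∈ L, z ∈ gs e := by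
  induction L with
  | nil => simp [sumList, gs, BExp.eval]
  | cons e L ih =>
    rw [sumList_cons]
    simp only [gs, Set.mem_union, ih, List.mem_cons]
    constructor
    · rintro (h | ⟨e', h1, h2⟩)
      · exact ⟨e, Or.inl rfl, h⟩
      · exact ⟨e', Or.inr h1, h2⟩
    · rintro ⟨e', (rfl | h1), h2⟩
      · exact Or.inl h2
      · exact Or.inr ⟨e', h1, h2⟩

lemma mem_fpow_uExp (ps : List A) (hps : ∀ p : A, p ∈ ps)
    (l : List (Atom T × A)) (β : Atom T) :
    (⟨l, β⟩ : GStr T A) ∈ fpow (gs (sumList (ps.map .act))) l.length := by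
  induction l with
  | nil => simp [fpow, atomsGS]
  | cons a l ih =>
    refine ⟨⟨[a], (GStr.mk l β).first⟩, ?_, ⟨l, β⟩, ih, rfl, rfl⟩
    rw [mem_gs_sumList]
    exact ⟨.act a.2, List.mem_map_of_mem (hps a.2),
      ⟨a.1, (GStr.mk l β).first, by rfl⟩⟩

lemma gs_uExp (ps : List A) (hps : ∀ p : A, p ∈ ps) :
    gs (uExp ps : KExp T A) = Set.univ := by
  ext z
  simp only [Set.mem_univ, iff_true, uExp, gs, fstar, Set.mem_iUnion]
  exact ⟨z.pairs.length, mem_fpow_uExp ps hps z.pairs z.last⟩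

lemma gs_eqn_term (b : BExp T) (p : A) (b' : BExp T) (z : GStr T A) :
    z ∈ gs (.cat (.cat (.test b) (.act p)) (.test (.not b')) : KExp T A) ↔
      ∃ α β, z = ⟨[(α, p)], β⟩ ∧ b.eval α = true ∧ b'.eval β = false := by
  simp only [gs, fprod, Set.mem_setOf_eq, BExp.eval]
  constructor
  · rintro ⟨v, ⟨⟨xbp, xbl⟩, ⟨hxb0, hxb1⟩, xa, ⟨α, γ, rfl⟩, hl1, rfl⟩,
      ⟨yp, yl⟩, ⟨hy0, hy1⟩, hl2, rfl⟩
    simp only at hxb0 hxb1 hy0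
    subst hxb0 hy0
    simp only [first_cons] at hl1
    simp only [first_nil, List.nil_append] at hl2
    subst hl1 hl2
    exact ⟨xbl, γ, by simp, hxb1, by simpa using hy1⟩
  · rintro ⟨α, β, rfl, hb, hb'⟩
    exact ⟨⟨[(α, p)], β⟩, ⟨⟨[], α⟩, ⟨rfl, hb⟩, ⟨[(α, p)], β⟩, ⟨α, β, rfl⟩, rfl, rfl⟩,
      ⟨[], β⟩, ⟨rfl, by simp [hb']⟩, rfl, by simp⟩

lemma gs_ineq_term (c c' : BExp T) (z : GStr T A) :
    z ∈ gs (.cat (.test c) (.test (.not c')) : KExp T A) ↔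
      z.pairs = [] ∧ c.eval z.last = true ∧ c'.eval z.last = false := by
  simp only [gs, fprod, Set.mem_setOf_eq, BExp.eval]
  constructor
  · rintro ⟨⟨xp, xl⟩, ⟨hx0, hx1⟩, ⟨yp, yl⟩, ⟨hy0, hy1⟩, hl, rfl⟩
    simp only at hx0 hx1 hy0 hy1
    subst hx0 hy0
    simp only [first_nil] at hl
    subst hl
    exact ⟨by simp, hx1, by simpa using hy1⟩
  · rintro ⟨h0, hc, hc'⟩
    exact ⟨⟨[], z.last⟩, ⟨rfl, hc⟩, ⟨[], z.last⟩, ⟨rfl, by simp [hc']⟩, rfl,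
      by cases z; simp_all⟩

def Rchar (G : Gamma T A) (z : GStr T A) : Prop :=
  (z.pairs = [] ∧ ∃ cc ∈ G.ineqs, cc.1.eval z.last = true ∧ cc.2.eval z.last = false) ∨
  (∃ α p β, z = ⟨[(α, p)], β⟩ ∧
    ∃ eq ∈ G.eqns, eq.2.1 = p ∧ eq.1.eval α = true ∧ eq.2.2.eval β = false)

lemma mem_gs_rExp (G : Gamma T A) (z : GStr T A) :
    z ∈ gs (rExp G) ↔ Rchar G z := by
  rw [rExp, mem_gs_sumList]
  constructor
  · rintro ⟨e, he, hz⟩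
    rcases List.mem_append.1 he with h | h
    · obtain ⟨eq, heq, rfl⟩ := List.mem_map.1 h
      obtain ⟨α, β, rfl, h1, h2⟩ := (gs_eqn_term _ _ _ _).1 hz
      exact Or.inr ⟨α, eq.2.1, β, rfl, eq, heq, rfl, h1, h2⟩
    · obtain ⟨cc, hcc, rfl⟩ := List.mem_map.1 h
      obtain ⟨h0, h1, h2⟩ := (gs_ineq_term _ _ _).1 hz
      exact Or.inl ⟨h0, cc, hcc, h1, h2⟩
  · rintro (⟨h0, cc, hcc, h1, h2⟩ | ⟨α, p, β, rfl, eq, heq, hp, h1, h2⟩)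
    · refine ⟨_, List.mem_append.2 (Or.inr (List.mem_map_of_mem hcc)), ?_⟩
      exact (gs_ineq_term _ _ _).2 ⟨h0, h1, h2⟩
    · refine ⟨_, List.mem_append.2 (Or.inl (List.mem_map_of_mem heq)), ?_⟩
      exact (gs_eqn_term _ _ _ _).2 ⟨α, β, by rw [hp], h1, h2⟩

lemma mem_gs_uru (G : Gamma T A) (ps : List A) (hps : ∀ p : A, p ∈ ps) (z : GStr T A) :
    z ∈ gs (uru G ps) ↔ ∃ l₁ l₂, ∃ m ∈ gs (rExp G),
      z.pairs = l₁ ++ (m.pairs ++ l₂) ∧ m.last = (GStr.mk l₂ z.last).first := by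
  show z ∈ fprod (fprod (gs (uExp ps)) (gs (rExp G))) (gs (uExp ps)) ↔ _
  rw [gs_uExp ps hps]
  constructor
  · rintro ⟨v, ⟨w₁, -, m, hm, h1, rfl⟩, w₂, -, h2, rfl⟩
    refine ⟨w₁.pairs, w₂.pairs, m, hm, by simp, ?_⟩
    simp only at h2
    rw [h2]
  · rintro ⟨l₁, l₂, m, hm, hz, hlast⟩
    refine ⟨⟨l₁ ++ m.pairs, m.last⟩, ⟨⟨l₁, m.first⟩, trivial, m, hm, rfl, by cases m; rfl⟩,
      ⟨l₂, z.last⟩, trivial, hlast, ?_⟩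
    cases z
    simp_all

lemma atomsOf_cons (a : Atom T × A) (l : List (Atom T × A)) (β : Atom T) :
    atomsOf (⟨a :: l, β⟩ : GStr T A) = a.1 :: atomsOf ⟨l, β⟩ := rfl

lemma triplesOf_nil (β : Atom T) :
    triplesOf (⟨[], β⟩ : GStr T A) = [] := rfl

lemma triplesOf_cons (a : Atom T × A) (l : List (Atom T × A)) (β : Atom T) :
    triplesOf (⟨a :: l, β⟩ : GStr T A) =
      (a.1, a.2, (GStr.mk l β).first) :: triplesOf ⟨l, β⟩ := by
  cases l <;> rfl

lemma atom_split (C : Atom T → Prop) (l : List (Atom T × A)) (β : Atom T) :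
    (∃ l₁ l₂ : List (Atom T × A), l = l₁ ++ l₂ ∧ C (GStr.mk l₂ β).first) ↔
      ∃ α ∈ atomsOf (⟨l, β⟩ : GStr T A), C α := by
  induction l with
  | nil =>
    simp only [atomsOf, List.map_nil, List.nil_append, List.mem_singleton]
    constructor
    · rintro ⟨l₁, l₂, h, hC⟩
      obtain ⟨rfl, rfl⟩ := List.append_eq_nil_iff.1 h.symm
      exact ⟨β, rfl, hC⟩
    · rintro ⟨α, rfl, hC⟩
      exact ⟨[], [], rfl, hC⟩
  | cons a l ih =>
    rw [atomsOf_cons]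
    constructor
    · rintro ⟨l₁, l₂, h, hC⟩
      cases l₁ with
      | nil =>
        simp only [List.nil_append] at h
        subst h
        exact ⟨a.1, List.mem_cons_self, by simpa using hC⟩
      | cons b l₁ =>
        simp only [List.cons_append, List.cons.injEq] at h
        obtain ⟨rfl, h⟩ := h
        obtain ⟨α, hα, hC'⟩ := ih.1 ⟨l₁, l₂, h, hC⟩
        exact ⟨α, List.mem_cons_of_mem _ hα, hC'⟩
    · rintro ⟨α, hα, hC⟩
      rcases List.mem_cons.1 hα with rfl | hα
      · exact ⟨[], a :: l, rfl, by simpa using hC⟩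
      · obtain ⟨l₁, l₂, h, hC'⟩ := ih.2 ⟨α, hα, hC⟩
        exact ⟨a :: l₁, l₂, by rw [h]; rfl, hC'⟩

lemma triple_split (D : Atom T → A → Atom T → Prop) (l : List (Atom T × A)) (β : Atom T) :
    (∃ l₁ l₂ : List (Atom T × A), ∃ α p, l = l₁ ++ (α, p) :: l₂ ∧
        D α p (GStr.mk l₂ β).first) ↔
      ∃ tr ∈ triplesOf (⟨l, β⟩ : GStr T A), D tr.1 tr.2.1 tr.2.2 := by
  induction l with
  | nil =>
    simp only [triplesOf_nil, List.not_mem_nil, false_and, exists_false, iff_false]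
    rintro ⟨l₁, l₂, α, p, h, -⟩
    exact List.not_mem_nil (a := (α, p)) (h ▸ List.mem_append.2 (Or.inr (List.mem_cons_self)))
  | cons a l ih =>
    rw [triplesOf_cons]
    constructor
    · rintro ⟨l₁, l₂, α, p, h, hD⟩
      cases l₁ with
      | nil =>
        simp only [List.nil_append, List.cons.injEq] at h
        obtain ⟨rfl, rfl⟩ := h
        exact ⟨_, List.mem_cons_self, hD⟩
      | cons b l₁ =>
        simp only [List.cons_append, List.cons.injEq] at h
        obtain ⟨rfl, h⟩ := h
        obtain ⟨tr, htr, hD'⟩ := ih.1 ⟨l₁, l₂, α, p, h, hD⟩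
        exact ⟨tr, List.mem_cons_of_mem _ htr, hD'⟩
    · rintro ⟨tr, htr, hD⟩
      rcases List.mem_cons.1 htr with rfl | htr
      · exact ⟨[], l, a.1, a.2, by simp, hD⟩
      · obtain ⟨l₁, l₂, α, p, h, hD'⟩ := ih.2 ⟨tr, htr, hD⟩
        exact ⟨a :: l₁, l₂, α, p, by rw [h]; rfl, hD'⟩



end Aux

end KAT

open KAT in
/-- Characterization of membership in `GS(uru)`. -/
theorem mem_gs_uru_iff {T A : Type} [DecidableEq A]
    (G : Gamma T A) (ps : List A) (hps : ∀ p : A, p ∈ ps) (x : GStr T A) :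
    x ∈ gs (uru G ps) ↔
      (∃ α ∈ atomsOf x, ∃ cc ∈ G.ineqs, cc.1.eval α = true ∧ cc.2.eval α = false) ∨
      (∃ tr ∈ triplesOf x, ∃ eq ∈ G.eqns,
        eq.2.1 = tr.2.1 ∧ eq.1.eval tr.1 = true ∧ eq.2.2.eval tr.2.2 = false) := by
  obtain ⟨l, β⟩ := x
  rw [mem_gs_uru G ps hps]
  constructor
  · rintro ⟨l₁, l₂, m, hm, hpairs, hlast⟩
    rcases (mem_gs_rExp G m).1 hm with ⟨h0, cc, hcc, h1, h2⟩ | ⟨α, p, γ, rfl, eq, heq, hp, h1, h2⟩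
    · refine Or.inl ((atom_split
        (fun α => ∃ cc ∈ G.ineqs, cc.1.eval α = true ∧ cc.2.eval α = false) l β).1
        ⟨l₁, l₂, by simpa [h0] using hpairs, cc, hcc, hlast ▸ h1, hlast ▸ h2⟩)
    · refine Or.inr ((triple_split
        (fun α p γ => ∃ eq ∈ G.eqns, eq.2.1 = p ∧ eq.1.eval α = true ∧ eq.2.2.eval γ = false)
        l β).1 ⟨l₁, l₂, α, p, by simpa using hpairs, eq, heq, hp, h1, ?_⟩)
      simp only at hlast
      exact hlast ▸ h2
  · rintro (h | h)
    · obtain ⟨l₁, l₂, hsp, cc, hcc, h1, h2⟩ := (atom_split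
        (fun α => ∃ cc ∈ G.ineqs, cc.1.eval α = true ∧ cc.2.eval α = false) l β).2 h
      refine ⟨l₁, l₂, ⟨[], (GStr.mk l₂ β).first⟩, ?_, by simpa using hsp, rfl⟩
      exact (mem_gs_rExp G _).2 (Or.inl ⟨rfl, cc, hcc, h1, h2⟩)
    · obtain ⟨l₁, l₂, α, p, hsp, eq, heq, hp, h1, h2⟩ := (triple_split
        (fun α p γ => ∃ eq ∈ G.eqns, eq.2.1 = p ∧ eq.1.eval α = true ∧ eq.2.2.eval γ = false)
        l β).2 h
      refine ⟨l₁, l₂, ⟨[(α, p)], (GStr.mk l₂ β).first⟩, ?_, by simpa using hsp, rfl⟩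
      exact (mem_gs_rExp G _).2 (Or.inr ⟨α, p, _, rfl, eq, heq, hp, h1, h2⟩)
end
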